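/- arXiv:2204.00611 — 3 statements merged into one kernel-verified Lean document; each statement's English description precedes it below -/
import Mathlib

section
/- The signature of a path is invariant under reparametrization: if X : [0,T] → ℝ^d is continuously differentiable and φ : [0,T] → [0,T] is a continuously differentiable increasing bijection, then every iterated integral of X ∘ φ over (0,T) equals the corresponding iterated integral of X over (0,T). -/
open intervalIntegral

/-- Coordinate model of the tensor power `(ℝ^d)^{⊗ n}`. -/
def Tensor (d n : ℕ) : Type := (Fin n → Fin d) → ℝ

/-- The `n`-th level of the signature of a path `X : ℝ → ℝ^d` over `(s, t)`,
in coordinates: `sig X s n t f` is the iterated integral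
`∫_{s < s₁ < ⋯ < sₙ < t} dX^{f 1}_{s₁} ⋯ dX^{f n}_{sₙ}`. -/
noncomputable def sig {d : ℕ} (X : ℝ → Fin d → ℝ) (s : ℝ) : (n : ℕ) → ℝ → Tensor d n
  | 0 => fun _ _ => 1
  | n + 1 => fun t f =>
      ∫ u in s..t, sig X s n u (fun i => f i.castSucc)
        * deriv (fun r => X r (f (Fin.last n))) u

lemma sig_cont {d : ℕ} {X : ℝ → Fin d → ℝ} (hX : ContDiff ℝ 1 X) (s : ℝ) :
    ∀ (n : ℕ) (f : Fin n → Fin d), Continuous (fun t => sig X s n t f) := by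
  intro n
  induction n with
  | zero => intro f; exact continuous_const
  | succ n ih =>
    intro f
    have hXi : Continuous (deriv (fun r => X r (f (Fin.last n)))) :=
      (contDiff_pi.mp hX (f (Fin.last n))).continuous_deriv le_rfl
    have hint : Continuous (fun u => sig X s n u (fun i => f i.castSucc) *
        deriv (fun r => X r (f (Fin.last n))) u) := (ih _).mul hXi
    simpa [sig] using intervalIntegral.continuous_primitive
      (fun a b => hint.intervalIntegrable a b) s

lemma sig_reparam {d : ℕ} (X : ℝ → Fin d → ℝ) (hX : ContDiff ℝ 1 X)
    (φ : ℝ → ℝ) (hφ : ContDiff ℝ 1 φ) (hφ0 : φ 0 = 0) :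
    ∀ (n : ℕ) (f : Fin n → Fin d) (t : ℝ),
      sig (fun r => X (φ r)) 0 n t f = sig X 0 n (φ t) f := by
  intro n
  induction n with
  | zero => intro f t; rfl
  | succ n ih =>
    intro f t
    set i := f (Fin.last n) with hi
    set g : Fin n → Fin d := fun j => f j.castSucc with hg
    have hXi : ContDiff ℝ 1 (fun r => X r i) := contDiff_pi.mp hX i
    have hchain : ∀ u, deriv (fun r => X (φ r) i) u
        = deriv (fun r => X r i) (φ u) * deriv φ u := by
      intro u
      exact deriv_comp u (hXi.differentiable one_ne_zero (φ u)) (hφ.differentiable one_ne_zero u)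
    have hG : Continuous (fun v => sig X 0 n v g * deriv (fun r => X r i) v) :=
      (sig_cont hX 0 n g).mul (hXi.continuous_deriv le_rfl)
    have hsub : (∫ u in (0:ℝ)..t, deriv φ u •
          (sig X 0 n (φ u) g * deriv (fun r => X r i) (φ u)))
        = ∫ v in (φ 0)..(φ t), sig X 0 n v g * deriv (fun r => X r i) v :=
      integral_comp_smul_deriv (fun x _ => (hφ.differentiable one_ne_zero x).hasDerivAt)
        (hφ.continuous_deriv le_rfl).continuousOn hG
    show (∫ u in (0:ℝ)..t, sig (fun r => X (φ r)) 0 n u g * deriv (fun r => X (φ r) i) u)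
        = ∫ v in (0:ℝ)..(φ t), sig X 0 n v g * deriv (fun r => X r i) v
    rw [hφ0] at hsub
    rw [← hsub]
    apply intervalIntegral.integral_congr
    intro u _
    simp only []
    rw [ih g u, hchain u]
    simp [smul_eq_mul]
    ring

/-- **Invariance of the signature under reparametrization**: if `X` is `C¹` and
`φ : [0,T] → [0,T]` is a `C¹` increasing bijection (with `φ 0 = 0`, `φ T = T`),
then every iterated integral of `X ∘ φ` over `(0, T)` equals the corresponding
iterated integral of `X` over `(0, T)`. -/
theorem sig_reparametrization_invariant {d : ℕ} (T : ℝ) (hT : 0 < T)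
    (X : ℝ → Fin d → ℝ) (hX : ContDiff ℝ 1 X)
    (φ : ℝ → ℝ) (hφ : ContDiff ℝ 1 φ)
    (hmono : StrictMonoOn φ (Set.Icc 0 T))
    (hφ0 : φ 0 = 0) (hφT : φ T = T) :
    ∀ (n : ℕ) (f : Fin n → Fin d),
      sig (fun t => X (φ t)) 0 n T f = sig X 0 n T f := by
  intro n f
  have h := sig_reparam X hX φ hφ hφ0 n f T
  rwa [hφT] at h
end

section
/- If μ and ν are Borel probability measures on ℝ^d, each absolutely continuous with respect to Lebesgue measure, then there exists a measurable map H : ℝ^d → ℝ^d such that the pushforward of μ under H equals ν. -/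
open MeasureTheory ProbabilityTheory Set Filter Topology

section OneDim

variable (μ : Measure ℝ) [IsProbabilityMeasure μ]

/-- For an atomless measure, the cdf has no jumps. -/
lemma leftLim_cdf_aux [NullSingletonClass μ] (x : ℝ) : Function.leftLim (cdf μ) x = cdf μ x := by
  have h1 : (cdf μ).measure {x} = 0 := by rw [measure_cdf]; exact measure_singleton x
  rw [StieltjesFunction.measure_singleton] at h1
  have h2 : cdf μ x - Function.leftLim (cdf μ) x ≤ 0 := by
    simpa [ENNReal.ofReal_eq_zero] using h1
  have h3 : Function.leftLim (cdf μ) x ≤ cdf μ x := (monotone_cdf μ).leftLim_le le_rfl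
  linarith

lemma measure_Iio_cdf_aux (x : ℝ) [NullSingletonClass μ] : μ (Iio x) = ENNReal.ofReal (cdf μ x) := by
  rw [ofReal_cdf μ x]
  exact measure_congr Iio_ae_eq_Iic

/-- Key: the cdf of an atomless probability measure pushes it to the uniform measure:
`μ {y | cdf μ y ≤ c} = ofReal c` for `c ∈ [0,1]`. -/
lemma measure_cdf_le_aux [NullSingletonClass μ] {c : ℝ} (hc0 : 0 ≤ c) (hc1 : c ≤ 1) :
    μ {y | cdf μ y ≤ c} = ENNReal.ofReal c := by
  set F := cdf μ with hF
  by_cases hall : ∀ y, F y ≤ c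
  · have h1 : (1:ℝ) ≤ c := le_of_tendsto (tendsto_cdf_atTop μ) (Eventually.of_forall hall)
    have : c = 1 := le_antisymm hc1 h1
    subst this
    have : {y | F y ≤ 1} = univ := eq_univ_of_forall hall
    rw [this]; simp [measure_univ]
  · push_neg at hall
    obtain ⟨z, hz⟩ := hall
    by_cases hne : ∃ y, F y ≤ c
    · obtain ⟨y₀, hy₀⟩ := hne
      have hbdd : BddAbove {y | F y ≤ c} :=
        ⟨z, fun y hy => le_of_not_gt fun h =>
          absurd (le_trans (monotone_cdf μ h.le) hy) (not_le.mpr hz)⟩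
      have hne' : {y | F y ≤ c}.Nonempty := ⟨y₀, hy₀⟩
      set s := sSup {y | F y ≤ c} with hs
      have hFs_le : F s ≤ c := by
        have hsub : ∀ y < s, F y ≤ c := by
          intro y hy
          obtain ⟨y', hy', hyy'⟩ := exists_lt_of_lt_csSup hne' hy
          exact le_trans (monotone_cdf μ hyy'.le) hy'
        have := leftLim_cdf_aux μ s
        rw [← this]
        refine le_of_tendsto ((monotone_cdf μ).tendsto_leftLim s) ?_
        filter_upwards [self_mem_nhdsWithin] with y hy using hsub y hy
      have hFs_ge : c ≤ F s := by
        have h1 : Tendsto F (𝓝[>] s) (𝓝 (F s)) := by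
          have := (cdf μ).right_continuous s
          exact this.tendsto.mono_left (nhdsWithin_mono _ Ioi_subset_Ici_self)
        refine ge_of_tendsto h1 ?_
        filter_upwards [self_mem_nhdsWithin] with y hy
        by_contra h
        push_neg at h
        exact absurd (le_csSup hbdd h.le) (not_le.mpr hy)
      have hFs : F s = c := le_antisymm hFs_le hFs_ge
      have hsub1 : Iio s ⊆ {y | F y ≤ c} := fun y hy => by
        obtain ⟨y', hy', hyy'⟩ := exists_lt_of_lt_csSup hne' hy
        exact le_trans (monotone_cdf μ hyy'.le) hy'
      have hsub2 : {y | F y ≤ c} ⊆ Iic s := fun y hy => le_csSup hbdd hy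
      have h1 : μ (Iio s) = ENNReal.ofReal c := by rw [measure_Iio_cdf_aux, hFs]
      have h2 : μ (Iic s) = ENNReal.ofReal c := by rw [← ofReal_cdf μ s, hFs]
      refine le_antisymm ?_ ?_
      · calc μ {y | F y ≤ c} ≤ μ (Iic s) := measure_mono hsub2
          _ = ENNReal.ofReal c := h2
      · calc ENNReal.ofReal c = μ (Iio s) := h1.symm
          _ ≤ μ {y | F y ≤ c} := measure_mono hsub1
    · push_neg at hne
      have h0 : c ≤ 0 := by
        refine ge_of_tendsto (tendsto_cdf_atBot μ) ?_
        exact Eventually.of_forall fun y => (hne y).le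
      have : c = 0 := le_antisymm h0 hc0
      subst this
      have : {y | F y ≤ 0} = ∅ :=
        eq_empty_of_forall_notMem fun y hy => absurd hy (not_le.mpr (hne y))
      rw [this]; simp

lemma measure_cdf_eq_zero_aux [NullSingletonClass μ] : μ {y | cdf μ y ≤ 0} = 0 := by
  simpa using measure_cdf_le_aux μ (le_refl (0:ℝ)) zero_le_one

lemma measure_cdf_eq_one_aux [NullSingletonClass μ] : μ {y | 1 ≤ cdf μ y} = 0 := by
  have hlt : μ {y | cdf μ y < 1} = 1 := by
    refine le_antisymm (le_trans (measure_mono (subset_univ _)) (by simp)) ?_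
    have key : ∀ n : ℕ, ENNReal.ofReal (1 - 1/(n+1)) ≤ μ {y | cdf μ y < 1} := by
      intro n
      have h1 : (0:ℝ) ≤ 1 - 1/(n+1) := by
        have : 1/((n:ℝ)+1) ≤ 1 := by
          rw [div_le_one (by positivity)]; linarith [Nat.cast_nonneg (α := ℝ) n]
        linarith
      have h2 : (1:ℝ) - 1/(n+1) ≤ 1 := by
        have : (0:ℝ) < 1/(n+1) := by positivity
        linarith
      rw [← measure_cdf_le_aux μ h1 h2]
      refine measure_mono fun y hy => ?_
      have : (0:ℝ) < 1/(n+1) := by positivity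
      simp only [mem_setOf_eq] at hy ⊢
      linarith
    have hlim : Tendsto (fun n : ℕ => ENNReal.ofReal (1 - 1/(n+1))) atTop (𝓝 1) := by
      have h : Tendsto (fun n : ℕ => (1:ℝ) - 1/(n+1)) atTop (𝓝 1) := by
        have := tendsto_one_div_add_atTop_nhds_zero_nat (𝕜 := ℝ)
        simpa using tendsto_const_nhds.sub this
      simpa [Function.comp_def] using (ENNReal.continuous_ofReal.tendsto 1).comp h
    exact le_of_tendsto hlim (Eventually.of_forall key)
  have hmeas : MeasurableSet {y | cdf μ y < 1} := (monotone_cdf μ).measurable measurableSet_Iio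
  have : {y | 1 ≤ cdf μ y} = {y | cdf μ y < 1}ᶜ := by ext y; simp [not_lt]
  rw [this, measure_compl hmeas (by simp), hlt]
  simp

end OneDim

section Quantile

variable (ν : Measure ℝ) [IsProbabilityMeasure ν]

/-- Quantile function of a probability measure on `ℝ`. -/
noncomputable def quantAux (u : ℝ) : ℝ := sInf {x | u ≤ cdf ν x}

lemma quantAux_le_iff {u x : ℝ} (hu0 : 0 < u) (hu1 : u < 1) :
    quantAux ν u ≤ x ↔ u ≤ cdf ν x := by
  set S := {x | u ≤ cdf ν x} with hS
  have hne : S.Nonempty := by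
    obtain ⟨x, hx⟩ := ((tendsto_cdf_atTop ν).eventually_const_lt hu1).exists
    exact ⟨x, hx.le⟩
  have hbdd : BddBelow S := by
    obtain ⟨x₀, hx₀⟩ : ∃ x₀, cdf ν x₀ < u :=
      ((tendsto_cdf_atBot ν).eventually_lt_const hu0).exists
    refine ⟨x₀, fun x hx => le_of_not_gt fun h => ?_⟩
    exact absurd (le_trans hx (monotone_cdf ν h.le)) (not_le.mpr hx₀)
  constructor
  · intro h
    have key : u ≤ cdf ν (quantAux ν u) := by
      have h1 : ∀ ε > (0:ℝ), u ≤ cdf ν (quantAux ν u + ε) := by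
        intro ε hε
        obtain ⟨y, hy, hlt⟩ := Real.lt_sInf_add_pos hne hε
        exact le_trans hy (monotone_cdf ν hlt.le)
      have h2 : Tendsto (fun ε : ℝ => cdf ν (quantAux ν u + ε)) (𝓝[>] 0)
          (𝓝 (cdf ν (quantAux ν u))) := by
        have hrc := ((cdf ν).right_continuous (quantAux ν u)).tendsto
        refine hrc.comp ?_
        have : Tendsto (fun ε : ℝ => quantAux ν u + ε) (𝓝[>] 0) (𝓝[>] (quantAux ν u)) := by
          refine tendsto_nhdsWithin_iff.mpr ⟨?_, ?_⟩
          · have h0 : Tendsto (fun ε : ℝ => quantAux ν u + ε) (𝓝 0) (𝓝 (quantAux ν u)) := by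
              simpa using tendsto_const_nhds.add (tendsto_id (α := ℝ) (x := 𝓝 0))
            exact h0.mono_left nhdsWithin_le_nhds
          · filter_upwards [self_mem_nhdsWithin] with ε hε
            have : (0:ℝ) < ε := hε
            simp only [mem_Ioi]
            linarith
        exact this.mono_right (nhdsWithin_mono _ Ioi_subset_Ici_self)
      exact ge_of_tendsto h2 (by filter_upwards [self_mem_nhdsWithin] with ε hε using h1 ε hε)
    exact le_trans key (monotone_cdf ν h)
  · intro h
    exact csInf_le hbdd h

lemma measurable_quantAux_comp {α : Type*} [MeasurableSpace α] {f : α → ℝ}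
    (hf : Measurable f) :
    Measurable (fun a => if f a ∈ Set.Ioo (0:ℝ) 1 then quantAux ν (f a) else 0) := by
  apply measurable_of_Iic
  intro x
  have hpre : (fun a => if f a ∈ Set.Ioo (0:ℝ) 1 then quantAux ν (f a) else 0) ⁻¹' Iic x
      = ({a | f a ∈ Set.Ioo (0:ℝ) 1} ∩ {a | f a ≤ cdf ν x})
        ∪ ({a | f a ∈ Set.Ioo (0:ℝ) 1}ᶜ ∩ {a | (0:ℝ) ≤ x}) := by
    ext a
    simp only [mem_preimage, mem_Iic, mem_union, mem_inter_iff, mem_compl_iff, mem_setOf_eq]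
    by_cases hgood : f a ∈ Set.Ioo (0:ℝ) 1
    · simp only [hgood, if_pos, true_and, not_true_eq_false, false_and, or_false]
      exact quantAux_le_iff ν hgood.1 hgood.2
    · simp [hgood]
  rw [hpre]
  have hm1 : MeasurableSet {a | f a ∈ Set.Ioo (0:ℝ) 1} := hf measurableSet_Ioo
  have hm2 : MeasurableSet {a | f a ≤ cdf ν x} := hf measurableSet_Iic
  refine (hm1.inter hm2).union (hm1.compl.inter ?_)
  by_cases h : (0:ℝ) ≤ x
  · simp [h]
  · simp [h]

/-- The preimage identity used both for measurability and for computing the pushforward. -/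
lemma quantAux_comp_preimage {α : Type*} {f : α → ℝ} (x : ℝ) :
    (fun a => if f a ∈ Set.Ioo (0:ℝ) 1 then quantAux ν (f a) else 0) ⁻¹' Iic x
      = ({a | f a ∈ Set.Ioo (0:ℝ) 1} ∩ {a | f a ≤ cdf ν x})
        ∪ ({a | f a ∈ Set.Ioo (0:ℝ) 1}ᶜ ∩ {a | (0:ℝ) ≤ x}) := by
  ext a
  simp only [mem_preimage, mem_Iic, mem_union, mem_inter_iff, mem_compl_iff, mem_setOf_eq]
  by_cases hgood : f a ∈ Set.Ioo (0:ℝ) 1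
  · simp only [hgood, if_pos, true_and, not_true_eq_false, false_and, or_false]
    exact quantAux_le_iff ν hgood.1 hgood.2
  · simp [hgood]

end Quantile

lemma measure_union_null_right {α : Type*} [MeasurableSpace α] {μ : Measure α}
    {s t : Set α} (ht : μ t = 0) : μ (s ∪ t) = μ s :=
  le_antisymm ((measure_union_le _ _).trans (by rw [ht, add_zero]))
    (measure_mono Set.subset_union_left)

/-- One-dimensional transport: any atomless probability measure on `ℝ` can be pushed
forward to any probability measure on `ℝ` by a measurable map. -/
theorem transport_real (μ ν : Measure ℝ) [IsProbabilityMeasure μ] [IsProbabilityMeasure ν]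
    [NullSingletonClass μ] : ∃ H : ℝ → ℝ, Measurable H ∧ μ.map H = ν := by
  classical
  set F : ℝ → ℝ := fun y => cdf μ y with hFdef
  have hFmeas : Measurable F := (monotone_cdf μ).measurable
  set H : ℝ → ℝ := fun y => if F y ∈ Set.Ioo (0:ℝ) 1 then quantAux ν (F y) else 0 with hHdef
  have hHmeas : Measurable H := measurable_quantAux_comp ν hFmeas
  refine ⟨H, hHmeas, ?_⟩
  have : IsProbabilityMeasure (μ.map H) := Measure.isProbabilityMeasure_map hHmeas.aemeasurable
  -- the set where the cdf takes a boundary value is `μ`-null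
  have hbad : μ ({y | F y ∈ Set.Ioo (0:ℝ) 1}ᶜ) = 0 := by
    have hsub : {y | F y ∈ Set.Ioo (0:ℝ) 1}ᶜ ⊆ {y | cdf μ y ≤ 0} ∪ {y | 1 ≤ cdf μ y} := by
      intro y hy
      simp only [mem_compl_iff, mem_setOf_eq, Set.mem_Ioo, not_and_or, not_lt] at hy
      rcases hy with h | h
      · exact Or.inl h
      · exact Or.inr h
    refine le_antisymm (le_trans (measure_mono hsub) ?_) zero_le
    calc μ ({y | cdf μ y ≤ 0} ∪ {y | 1 ≤ cdf μ y})
        ≤ μ {y | cdf μ y ≤ 0} + μ {y | 1 ≤ cdf μ y} := measure_union_le _ _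
      _ = 0 := by rw [measure_cdf_eq_zero_aux, measure_cdf_eq_one_aux]; simp
  refine Measure.ext_of_Iic (μ.map H) ν fun x => ?_
  rw [Measure.map_apply hHmeas measurableSet_Iic]
  have hpre := quantAux_comp_preimage ν (f := F) x
  rw [hpre]
  set c : ℝ := cdf ν x with hc
  have hc0 : 0 ≤ c := cdf_nonneg ν x
  have hc1 : c ≤ 1 := cdf_le_one ν x
  have hA : μ ({y | F y ∈ Set.Ioo (0:ℝ) 1} ∩ {y | F y ≤ c}) = ENNReal.ofReal c := by
    have hle : μ ({y | F y ∈ Set.Ioo (0:ℝ) 1} ∩ {y | F y ≤ c}) ≤ μ {y | F y ≤ c} :=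
      measure_mono inter_subset_right
    have hge : μ {y | F y ≤ c}
        ≤ μ ({y | F y ∈ Set.Ioo (0:ℝ) 1} ∩ {y | F y ≤ c}) := by
      have hsub : {y | F y ≤ c}
          ⊆ ({y | F y ∈ Set.Ioo (0:ℝ) 1} ∩ {y | F y ≤ c}) ∪ {y | F y ∈ Set.Ioo (0:ℝ) 1}ᶜ := by
        intro y hy
        by_cases h : F y ∈ Set.Ioo (0:ℝ) 1
        · exact Or.inl ⟨h, hy⟩
        · exact Or.inr h
      calc μ {y | F y ≤ c}
          ≤ μ (({y | F y ∈ Set.Ioo (0:ℝ) 1} ∩ {y | F y ≤ c})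
              ∪ {y | F y ∈ Set.Ioo (0:ℝ) 1}ᶜ) := measure_mono hsub
        _ = μ ({y | F y ∈ Set.Ioo (0:ℝ) 1} ∩ {y | F y ≤ c}) := measure_union_null_right hbad
    have := le_antisymm hle (le_trans hge le_rfl)
    rw [this]
    exact measure_cdf_le_aux μ hc0 hc1
  have hB : μ ({y | F y ∈ Set.Ioo (0:ℝ) 1}ᶜ ∩ {y | (0:ℝ) ≤ x}) = 0 :=
    le_antisymm (le_trans (measure_mono inter_subset_left) hbad.le) zero_le
  rw [measure_union_null_right hB, hA, ofReal_cdf ν x]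

/-- Existence of a transport map: if `μ` and `ν` are Borel probability measures on
`ℝ^d`, each absolutely continuous with respect to Lebesgue measure, then there is a
measurable map `H : ℝ^d → ℝ^d` pushing `μ` forward to `ν`. -/
theorem exists_transport_map {d : ℕ}
    (μ ν : Measure (Fin d → ℝ)) [IsProbabilityMeasure μ] [IsProbabilityMeasure ν]
    (hμ : μ ≪ volume) (hν : ν ≪ volume) :
    ∃ H : (Fin d → ℝ) → (Fin d → ℝ), Measurable H ∧ μ.map H = ν := by
  rcases Nat.eq_zero_or_pos d with hd | hd
  · -- degenerate case: the space is a single point, so `μ = ν`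
    subst hd
    refine ⟨id, measurable_id, ?_⟩
    rw [Measure.map_id]
    ext s hs
    rcases (Set.subsingleton_of_subsingleton (s := s)).eq_empty_or_singleton with h | ⟨p, hp⟩
    · simp [h]
    · have huniv : s = univ := by
        rw [hp]
        exact eq_univ_of_forall fun y => by simp [Subsingleton.elim y p]
      simp [huniv]
  · -- main case: `Fin d → ℝ` is an uncountable standard Borel space
    haveI : Nonempty (Fin d) := ⟨⟨0, hd⟩⟩
    have hunc : ¬Countable (Fin d → ℝ) := by
      intro h
      have hinj : Function.Injective (fun r : ℝ => (fun _ : Fin d => r)) := by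
        intro a b hab
        exact congrFun hab (Classical.arbitrary (Fin d))
      have : Countable ℝ := Function.Injective.countable hinj
      exact Cardinal.not_countable_real (Set.countable_univ)
    have huncR : ¬Countable ℝ := by
      intro h
      exact Cardinal.not_countable_real (Set.countable_univ)
    let e : (Fin d → ℝ) ≃ᵐ ℝ := PolishSpace.measurableEquivOfNotCountable hunc huncR
    -- singletons in `ℝ^d` are Lebesgue-null, hence `μ`-null
    have hsing : ∀ p : Fin d → ℝ, μ {p} = 0 := by
      intro p
      refine hμ ?_
      rw [volume_pi]
      exact measure_singleton p
    set μ' : Measure ℝ := μ.map e with hμ'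
    set ν' : Measure ℝ := ν.map e with hν'
    haveI : IsProbabilityMeasure μ' := Measure.isProbabilityMeasure_map e.measurable.aemeasurable
    haveI : IsProbabilityMeasure ν' := Measure.isProbabilityMeasure_map e.measurable.aemeasurable
    haveI : NullSingletonClass μ' := by
      refine ⟨fun x => ?_⟩
      rw [hμ', Measure.map_apply e.measurable (measurableSet_singleton x)]
      have heq : e ⁻¹' {x} = {e.symm x} := by
        ext y
        simp only [mem_preimage, mem_singleton_iff]
        constructor
        · intro h
          rw [← h, MeasurableEquiv.symm_apply_apply]
        · intro h
          rw [h, MeasurableEquiv.apply_symm_apply]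
      rw [heq]
      exact hsing _
    obtain ⟨H₁, hH₁meas, hH₁map⟩ := transport_real μ' ν'
    refine ⟨e.symm ∘ H₁ ∘ e, e.symm.measurable.comp (hH₁meas.comp e.measurable), ?_⟩
    have h1 : μ.map (e.symm ∘ H₁ ∘ e) = ((μ.map e).map H₁).map e.symm := by
      rw [Measure.map_map hH₁meas e.measurable]
      exact (Measure.map_map e.symm.measurable (hH₁meas.comp e.measurable)).symm
    rw [h1, ← hμ', hH₁map, hν', Measure.map_map e.symm.measurable e.measurable,
      e.symm_comp_self, Measure.map_id]
end

section
/- Linear functionals on truncated signatures form an algebra point-wise on group-like elements (shuffle-type closure at level of linear maps on the full tensor algebra): for any two linear functionals e*_I, e*_J ∈ (T((ℝ^d)))* given by dual basis coordinate projections of lengths m and n, and any C¹ path X, the product e*_I(X)·e*_J(X) of the corresponding iterated integrals over (0,T) equals the sum over all (m,n)-shuffles σ of e*_{σ(I,J)}(X). In the simplest nontrivial case m = n = 1: (∫_0^T dX^i)·(∫_0^T dX^j) = ∫_0^T ∫_0^{t} dX^i_s dX^j_t + ∫_0^T ∫_0^{t} dX^j_s dX^i_t. -/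
open intervalIntegral

lemma coord_contDiff {d : ℕ} {X : ℝ → Fin d → ℝ} (hX : ContDiff ℝ 1 X) (k : Fin d) :
    ContDiff ℝ 1 (fun r => X r k) :=
  (ContinuousLinearMap.proj (R := ℝ) (φ := fun _ : Fin d => ℝ) k).contDiff.comp hX

lemma sig_one {d : ℕ} {X : ℝ → Fin d → ℝ} (hX : ContDiff ℝ 1 X) (t : ℝ)
    (f : Fin 1 → Fin d) : sig X 0 1 t f = X t (f 0) - X 0 (f 0) := by
  have hc := coord_contDiff hX (f 0)
  show (∫ u in (0:ℝ)..t, sig X 0 0 u _ * deriv (fun r => X r (f (Fin.last 0))) u)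
      = X t (f 0) - X 0 (f 0)
  have : (Fin.last 0) = (0 : Fin 1) := rfl
  rw [this]
  simp only [sig, one_mul]
  exact intervalIntegral.integral_deriv_eq_sub
    (fun u _ => hc.differentiable one_ne_zero u)
    ((hc.continuous_deriv le_rfl).intervalIntegrable 0 t)

/-- Shuffle-product identity for coordinate (dual-basis) functionals on the
signature, in the simplest nontrivial case `m = n = 1`: for a `C¹` path `X` and
coordinates `i, j`, the product of the level-one iterated integrals equals the sum
over the two `(1,1)`-shuffles of the level-two iterated integrals:
`(∫_0^T dX^i) · (∫_0^T dX^j) = ∫_0^T ∫_0^t dX^i_s dX^j_t + ∫_0^T ∫_0^t dX^j_s dX^i_t`,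
i.e. `(X^i_T − X^i_0)(X^j_T − X^j_0) = X^{(ij)} + X^{(ji)}`. -/
theorem shuffle_identity_level_one {d : ℕ} (T : ℝ) (X : ℝ → Fin d → ℝ)
    (hX : ContDiff ℝ 1 X) (i j : Fin d) :
    sig X 0 1 T ![i] * sig X 0 1 T ![j]
      = sig X 0 2 T ![i, j] + sig X 0 2 T ![j, i] := by
  have hci := coord_contDiff hX i
  have hcj := coord_contDiff hX j
  have hdi := hci.differentiable one_ne_zero
  have hdj := hcj.differentiable one_ne_zero
  have hdi' := hci.continuous_deriv le_rfl
  have hdj' := hcj.continuous_deriv le_rfl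
  have hsig2 : ∀ (a b : Fin d), sig X 0 2 T ![a, b]
      = ∫ u in (0:ℝ)..T, (X u a - X 0 a) * deriv (fun r => X r b) u := by
    intro a b
    show (∫ u in (0:ℝ)..T, sig X 0 1 u (fun k => ![a, b] k.castSucc)
        * deriv (fun r => X r (![a, b] (Fin.last 1))) u) = _
    refine intervalIntegral.integral_congr fun u _ => ?_
    rw [sig_one hX]
    rfl
  rw [sig_one hX, sig_one hX, hsig2, hsig2]
  simp only [Matrix.cons_val_zero]
  -- now prove the integration by parts identity
  set F := fun u => (X u i - X 0 i) * (X u j - X 0 j) with hF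
  have hderiv : ∀ u : ℝ, HasDerivAt F
      ((X u i - X 0 i) * deriv (fun r => X r j) u
        + (X u j - X 0 j) * deriv (fun r => X r i) u) u := by
    intro u
    have h1 : HasDerivAt (fun r => X r i - X 0 i) (deriv (fun r => X r i) u) u :=
      ((hdi u).hasDerivAt).sub_const _
    have h2 : HasDerivAt (fun r => X r j - X 0 j) (deriv (fun r => X r j) u) u :=
      ((hdj u).hasDerivAt).sub_const _
    have := h1.fun_mul h2
    exact this.congr_deriv (by ring)
  have hint : ∀ (a b : Fin d), IntervalIntegrable
      (fun u => (X u a - X 0 a) * deriv (fun r => X r b) u) MeasureTheory.volume 0 T := by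
    intro a b
    have hca := coord_contDiff hX a
    have hcb := coord_contDiff hX b
    exact (((hca.continuous.sub continuous_const).mul
      (hcb.continuous_deriv le_rfl))).intervalIntegrable 0 T
  have hintF : IntervalIntegrable (deriv F) MeasureTheory.volume 0 T := by
    refine IntervalIntegrable.congr_ae ((hint i j).add (hint j i))
      (Filter.EventuallyEq.symm (Filter.Eventually.of_forall fun u => (hderiv u).deriv))
  have key := intervalIntegral.integral_deriv_eq_sub
    (f := F) (fun u _ => (hderiv u).differentiableAt) hintF
  · have hF0 : F 0 = 0 := by simp [hF]
    have hFT : F T = (X T i - X 0 i) * (X T j - X 0 j) := rfl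
    rw [hF0, sub_zero, hFT] at key
    rw [← key]
    have hde : ∀ u : ℝ, deriv F u = (X u i - X 0 i) * deriv (fun r => X r j) u
        + (X u j - X 0 j) * deriv (fun r => X r i) u := fun u => (hderiv u).deriv
    rw [intervalIntegral.integral_congr (g := fun u =>
        (X u i - X 0 i) * deriv (fun r => X r j) u
        + (X u j - X 0 j) * deriv (fun r => X r i) u) (fun u _ => hde u)]
    rw [intervalIntegral.integral_add (hint i j) (hint j i)]
end
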